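/- If t ≥ 3 is odd and S = (1,1,2,2,2,…), then the S-packing chromatic number of G(ℤ,{2,t}) is exactly 4. -/

import Mathlib

def distG (t : ℤ) : SimpleGraph ℤ :=
  SimpleGraph.fromRel (fun i j => |i - j| = 2 ∨ |i - j| = t)

def patA : List (Fin 4) := [0,1,2,0,1,3]
def patB : List (Fin 4) := [0,1,2,0,3,1,0,2,1,3]
def patC : List (Fin 4) := [0,0,1,1,2,0,0,1,1,3]
def patP : List (Fin 4) := [0,0,1,1,0,2,1,0,0,1,3,0,1,2,0,1,1,0,3,1]

def pat (τ a : ZMod 60) : Fin 4 :=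
  if τ.val % 3 ≠ 0 then patA.getD (a.val % 6) 0
  else if τ.val % 5 ≠ 0 then
    (if τ.val % 10 = 3 ∨ τ.val % 10 = 7 then patC else patB).getD (a.val % 10) 0
  else patP.getD (a.val % 20) 0

set_option maxRecDepth 10000 in
lemma pat_spec : ∀ τ : ZMod 60, (∃ m : ZMod 60, τ = 2*m+1) → ∀ a : ZMod 60,
    ((pat τ a).val < 2 → pat τ a ≠ pat τ (a+2) ∧ pat τ a ≠ pat τ (a+τ)) ∧
    (2 ≤ (pat τ a).val → pat τ a ≠ pat τ (a+2) ∧ pat τ a ≠ pat τ (a+4) ∧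
      pat τ a ≠ pat τ (a+τ-2) ∧ pat τ a ≠ pat τ (a+τ) ∧ pat τ a ≠ pat τ (a+τ+2) ∧
      pat τ a ≠ pat τ (a+τ+τ)) := by decide

lemma key1 {τ : ZMod 60} (hτ : ∃ m : ZMod 60, τ = 2*m+1) {a s : ZMod 60}
    (hs : s = 2 ∨ s = τ) (hlt : (pat τ a).val < 2) : pat τ a ≠ pat τ (a + s) := by
  have h := (pat_spec τ hτ a).1 hlt
  rcases hs with rfl | rfl
  · exact h.1
  · exact h.2

lemma key2 {τ : ZMod 60} (hτ : ∃ m : ZMod 60, τ = 2*m+1) {a s : ZMod 60}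
    (hs : s = 2 ∨ s = 4 ∨ s = τ - 2 ∨ s = τ ∨ s = τ + 2 ∨ s = τ + τ)
    (hge : 2 ≤ (pat τ a).val) : pat τ a ≠ pat τ (a + s) := by
  have h := (pat_spec τ hτ a).2 hge
  rcases hs with rfl | rfl | rfl | rfl | rfl | rfl
  · exact h.1
  · exact h.2.1
  · have := h.2.2.1; rwa [add_sub_assoc] at this
  · exact h.2.2.2.1
  · have := h.2.2.2.2.1; rwa [add_assoc] at this
  · have := h.2.2.2.2.2; rwa [add_assoc] at this

section Aux
variable {t : ℤ}

lemma adj_add (h3 : 3 ≤ t) (x : ℤ) {d : ℤ} (hd : d = 2 ∨ d = t) :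
    (distG t).Adj x (x + d) := by
  rw [distG, SimpleGraph.fromRel_adj]
  have hd0 : 0 < d := by rcases hd with h | h <;> omega
  refine ⟨by intro h; omega, Or.inl ?_⟩
  have : x - (x + d) = -d := by ring
  rw [this, abs_neg, abs_of_pos hd0]
  tauto

lemma adj_diff (h3 : 3 ≤ t) {u v : ℤ} (h : (distG t).Adj u v) :
    u - v = 2 ∨ u - v = -2 ∨ u - v = t ∨ u - v = -t := by
  rw [distG, SimpleGraph.fromRel_adj] at h
  obtain ⟨-, h⟩ := h
  have h' : |u - v| = 2 ∨ |u - v| = t := by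
    rcases h with (h | h) | (h | h)
    · exact Or.inl h
    · exact Or.inr h
    · exact Or.inl (by rwa [abs_sub_comm])
    · exact Or.inr (by rwa [abs_sub_comm])
  rcases h' with h | h
  · rcases (abs_eq (by norm_num : (0:ℤ) ≤ 2)).mp h with h | h <;> omega
  · rcases (abs_eq (by omega : (0:ℤ) ≤ t)).mp h with h | h <;> omega

lemma dist_le_one (h3 : 3 ≤ t) (x : ℤ) {d : ℤ} (hd : d = 2 ∨ d = t) :
    (distG t).dist x (x + d) ≤ 1 := by
  have h := SimpleGraph.dist_le (SimpleGraph.Walk.cons (adj_add h3 x hd) SimpleGraph.Walk.nil)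
  simpa using h

lemma dist_le_two (h3 : 3 ≤ t) (x : ℤ) {d e : ℤ} (hd : d = 2 ∨ d = t) (he : e = 2 ∨ e = t)
    {y : ℤ} (hy : y = x + d + e ∨ y = x + d - e) : (distG t).dist x y ≤ 2 := by
  have h2 : (distG t).Adj (x + d) y := by
    rcases hy with hy | hy
    · rw [hy]; exact adj_add h3 (x + d) he
    · have : x + d = y + e := by omega
      rw [this]; exact ((adj_add h3 y he)).symm
  have h := SimpleGraph.dist_le (SimpleGraph.Walk.cons (adj_add h3 x hd)
    (SimpleGraph.Walk.cons h2 SimpleGraph.Walk.nil))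
  simpa using h

lemma reach_step (ht : Odd t) (h3 : 3 ≤ t) (x : ℤ) : (distG t).Reachable x (x + 1) := by
  obtain ⟨m, hm⟩ := ht
  have hdown : ∀ (n : ℕ) (y : ℤ), (distG t).Reachable y (y - 2 * n) := by
    intro n
    induction n with
    | zero => intro y; simpa using SimpleGraph.Reachable.refl y
    | succ k ih =>
      intro y
      refine (ih y).trans ?_
      have := ((adj_add h3 (y - 2*k - 2) (Or.inl rfl))).symm.reachable
      have he : y - 2*k - 2 + 2 = y - 2*k := by ring
      rw [he] at this
      have he2 : y - 2 * (k+1 : ℕ) = y - 2*k - 2 := by push_cast; ring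
      rw [he2]
      exact this
  have h1 : (distG t).Reachable x (x + t) := (adj_add h3 x (Or.inr rfl)).reachable
  have hm1 : 0 ≤ m := by omega
  have h2 := hdown m.toNat (x + t)
  have he : x + t - 2 * (m.toNat : ℤ) = x + 1 := by
    rw [Int.toNat_of_nonneg hm1]; omega
  rw [he] at h2
  exact h1.trans h2

lemma reach (ht : Odd t) (h3 : 3 ≤ t) (x y : ℤ) : (distG t).Reachable x y := by
  have key : ∀ (n : ℕ) (z : ℤ), (distG t).Reachable z (z + n) := by
    intro n
    induction n with
    | zero => intro z; simpa using SimpleGraph.Reachable.refl z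
    | succ k ih =>
      intro z
      refine (ih z).trans ?_
      have := reach_step ht h3 (z + k)
      have he : (z : ℤ) + (k+1 : ℕ) = z + k + 1 := by push_cast; ring
      rw [he]
      exact this
  rcases le_total x y with h | h
  · have := key (y - x).toNat x
    rw [Int.toNat_of_nonneg (by omega), (by omega : x + (y - x) = y)] at this
    exact this
  · have := key (x - y).toNat y
    rw [Int.toNat_of_nonneg (by omega), (by omega : y + (x - y) = x)] at this
    exact this.symm

lemma small_of_dist_le_two (ht : Odd t) (h3 : 3 ≤ t) {u v : ℤ} (hne : u ≠ v)
    (h : (distG t).dist u v ≤ 2) :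
    u - v = 2 ∨ u - v = -2 ∨ u - v = t ∨ u - v = -t ∨ u - v = 4 ∨ u - v = -4 ∨
    u - v = t - 2 ∨ u - v = -(t-2) ∨ u - v = t + 2 ∨ u - v = -(t+2) ∨
    u - v = t + t ∨ u - v = -(t+t) := by
  obtain ⟨p, hp⟩ := (reach ht h3 u v).exists_walk_length_eq_dist
  rw [← hp] at h
  cases p with
  | nil => exact absurd rfl hne
  | cons hadj q =>
    cases q with
    | nil =>
      rcases adj_diff h3 hadj with h1 | h1 | h1 | h1 <;> tauto
    | cons hadj2 r =>
      have hr : r.length = 0 := by simp only [SimpleGraph.Walk.length_cons] at h; omega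
      have := SimpleGraph.Walk.eq_of_length_eq_zero hr
      subst this
      rcases adj_diff h3 hadj with h1 | h1 | h1 | h1 <;>
        rcases adj_diff h3 hadj2 with h2 | h2 | h2 | h2 <;> omega

end Aux

lemma mem4 (t : ℤ) (ht : Odd t) (h3 : 3 ≤ t) :
    ∃ f : ℤ → Fin 4, ∀ u v : ℤ, u ≠ v → f u = f v →
      ((f u : ℕ) < 2 → ¬ (distG t).Adj u v) ∧ (2 ≤ (f u : ℕ) → 2 < (distG t).dist u v) := by
  refine ⟨fun i => pat (t : ZMod 60) (i : ZMod 60), ?_⟩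
  have hτ : ∃ m : ZMod 60, (t : ZMod 60) = 2*m+1 := by
    obtain ⟨m, hm⟩ := ht
    exact ⟨(m : ZMod 60), by rw [hm]; push_cast; ring⟩
  intro u v hne heq
  simp only at heq
  constructor
  · intro hlt hadj
    simp only at hlt
    have hltv : (pat (t : ZMod 60) (v : ZMod 60)).val < 2 := by rw [← heq]; exact hlt
    rcases adj_diff h3 hadj with h | h | h | h
    · have e : (u : ZMod 60) = (v : ZMod 60) + 2 := by
        have : u = v + 2 := by omega
        rw [this]; push_cast; ring
      exact key1 hτ (Or.inl rfl) hltv (by rw [← e]; exact heq.symm)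
    · have e : (v : ZMod 60) = (u : ZMod 60) + 2 := by
        have : v = u + 2 := by omega
        rw [this]; push_cast; ring
      exact key1 hτ (Or.inl rfl) hlt (by rw [← e]; exact heq)
    · have e : (u : ZMod 60) = (v : ZMod 60) + (t : ZMod 60) := by
        have : u = v + t := by omega
        rw [this]; push_cast; ring
      exact key1 hτ (Or.inr rfl) hltv (by rw [← e]; exact heq.symm)
    · have e : (v : ZMod 60) = (u : ZMod 60) + (t : ZMod 60) := by
        have : v = u + t := by omega
        rw [this]; push_cast; ring
      exact key1 hτ (Or.inr rfl) hlt (by rw [← e]; exact heq)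
  · intro hge
    simp only at hge
    have hgev : 2 ≤ (pat (t : ZMod 60) (v : ZMod 60)).val := by rw [← heq]; exact hge
    by_contra hd
    push_neg at hd
    have hsm := small_of_dist_le_two ht h3 hne hd
    rcases hsm with h | h | h | h | h | h | h | h | h | h | h | h
    · have e : (u : ZMod 60) = (v : ZMod 60) + 2 := by
        have : u = v + 2 := by omega
        rw [this]; push_cast; ring
      exact key2 hτ (s := 2) (by tauto) hgev (by rw [← e]; exact heq.symm)
    · have e : (v : ZMod 60) = (u : ZMod 60) + 2 := by
        have : v = u + 2 := by omega
        rw [this]; push_cast; ring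
      exact key2 hτ (s := 2) (by tauto) hge (by rw [← e]; exact heq)
    · have e : (u : ZMod 60) = (v : ZMod 60) + (t : ZMod 60) := by
        have : u = v + t := by omega
        rw [this]; push_cast; ring
      exact key2 hτ (s := (t : ZMod 60)) (by tauto) hgev (by rw [← e]; exact heq.symm)
    · have e : (v : ZMod 60) = (u : ZMod 60) + (t : ZMod 60) := by
        have : v = u + t := by omega
        rw [this]; push_cast; ring
      exact key2 hτ (s := (t : ZMod 60)) (by tauto) hge (by rw [← e]; exact heq)
    · have e : (u : ZMod 60) = (v : ZMod 60) + 4 := by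
        have : u = v + 4 := by omega
        rw [this]; push_cast; ring
      exact key2 hτ (s := 4) (by tauto) hgev (by rw [← e]; exact heq.symm)
    · have e : (v : ZMod 60) = (u : ZMod 60) + 4 := by
        have : v = u + 4 := by omega
        rw [this]; push_cast; ring
      exact key2 hτ (s := 4) (by tauto) hge (by rw [← e]; exact heq)
    · have e : (u : ZMod 60) = (v : ZMod 60) + ((t : ZMod 60) - 2) := by
        have : u = v + (t - 2) := by omega
        rw [this]; push_cast; ring
      exact key2 hτ (s := ((t : ZMod 60) - 2)) (by tauto) hgev (by rw [← e]; exact heq.symm)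
    · have e : (v : ZMod 60) = (u : ZMod 60) + ((t : ZMod 60) - 2) := by
        have : v = u + (t - 2) := by omega
        rw [this]; push_cast; ring
      exact key2 hτ (s := ((t : ZMod 60) - 2)) (by tauto) hge (by rw [← e]; exact heq)
    · have e : (u : ZMod 60) = (v : ZMod 60) + ((t : ZMod 60) + 2) := by
        have : u = v + (t + 2) := by omega
        rw [this]; push_cast; ring
      exact key2 hτ (s := ((t : ZMod 60) + 2)) (by tauto) hgev (by rw [← e]; exact heq.symm)
    · have e : (v : ZMod 60) = (u : ZMod 60) + ((t : ZMod 60) + 2) := by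
        have : v = u + (t + 2) := by omega
        rw [this]; push_cast; ring
      exact key2 hτ (s := ((t : ZMod 60) + 2)) (by tauto) hge (by rw [← e]; exact heq)
    · have e : (u : ZMod 60) = (v : ZMod 60) + ((t : ZMod 60) + (t : ZMod 60)) := by
        have : u = v + (t + t) := by omega
        rw [this]; push_cast; ring
      exact key2 hτ (s := ((t : ZMod 60) + (t : ZMod 60))) (by tauto) hgev (by rw [← e]; exact heq.symm)
    · have e : (v : ZMod 60) = (u : ZMod 60) + ((t : ZMod 60) + (t : ZMod 60)) := by
        have : v = u + (t + t) := by omega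
        rw [this]; push_cast; ring
      exact key2 hτ (s := ((t : ZMod 60) + (t : ZMod 60))) (by tauto) hge (by rw [← e]; exact heq)

lemma lb (t : ℤ) (ht : Odd t) (h3 : 3 ≤ t) (k : ℕ)
    (hk : ∃ f : ℤ → Fin k, ∀ u v : ℤ, u ≠ v → f u = f v →
      ((f u : ℕ) < 2 → ¬ (distG t).Adj u v) ∧ (2 ≤ (f u : ℕ) → 2 < (distG t).dist u v)) :
    4 ≤ k := by
  by_contra hlt
  push_neg at hlt
  obtain ⟨f, hf⟩ := hk
  have E : ∀ (x d : ℤ), (d = 2 ∨ d = t) → f x ≠ f (x + d) := by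
    intro x d hd heq
    have hne : x ≠ x + d := by rcases hd with rfl | rfl <;> omega
    have h := hf x (x + d) hne heq
    by_cases hv : (f x : ℕ) < 2
    · exact h.1 hv (adj_add h3 x hd)
    · have h2 := h.2 (by omega)
      have := dist_le_one h3 x hd
      omega
  have H : ∀ (x d e y : ℤ), (d = 2 ∨ d = t) → (e = 2 ∨ e = t) →
      (y = x + d + e ∨ y = x + d - e) → x ≠ y → 2 ≤ (f x : ℕ) → f x ≠ f y := by
    intro x d e y hd he hy hne hge heq
    have h2 := (hf x y hne heq).2 hge
    have := dist_le_two h3 x hd he hy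
    omega
  have heq2 : ∀ x y : ℤ, 2 ≤ (f x : ℕ) → 2 ≤ (f y : ℕ) → f x = f y := by
    intro x y hx hy
    have h1 := (f x).isLt
    have h2 := (f y).isLt
    exact Fin.val_injective (by omega)
  have vne : ∀ x y : ℤ, f x ≠ f y → (f x : ℕ) ≠ (f y : ℕ) := by
    intro x y h hv
    exact h (Fin.val_injective hv)
  set c : ℕ := if (f 0 : ℕ) < 2 then (f 0 : ℕ) else (f t : ℕ) + 1 with hc
  have inv : ∀ n : ℕ,
      ((f (2*(n:ℤ)) : ℕ) < 2 → (f (2*(n:ℤ)) : ℕ) % 2 = (c + n) % 2) ∧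
      ((f (2*(n:ℤ) + t) : ℕ) < 2 → (f (2*(n:ℤ) + t) : ℕ) % 2 = (c + n + 1) % 2) := by
    intro n
    induction n with
    | zero =>
      simp only [Nat.cast_zero, mul_zero, zero_add]
      constructor
      · intro h0
        rw [hc, if_pos h0]
        omega
      · intro h1
        by_cases h0 : (f 0 : ℕ) < 2
        · rw [hc, if_pos h0]
          have he := vne 0 t (by simpa using E 0 t (Or.inr rfl))
          omega
        · rw [hc, if_neg h0]
          omega
    | succ m ih =>
      set x : ℤ := 2*(m:ℤ) with hx
      have hp1 : (2*((m+1:ℕ):ℤ)) = x + 2 := by push_cast; ring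
      have hp2 : (2*((m+1:ℕ):ℤ) + t) = x + 2 + t := by push_cast; ring
      rw [hp2, hp1]
      have e1 : f x ≠ f (x + 2) := E x 2 (Or.inl rfl)
      have e2 : f (x + t) ≠ f (x + 2 + t) := by
        have := E (x + t) 2 (Or.inl rfl)
        have hpp : x + t + 2 = x + 2 + t := by ring
        rwa [hpp] at this
      have e3 : f x ≠ f (x + t) := E x t (Or.inr rfl)
      have e4 : f (x + 2) ≠ f (x + 2 + t) := E (x + 2) t (Or.inr rfl)
      have hcast : ((m+1:ℕ):ℤ) = (m:ℤ) + 1 := by push_cast; ring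
      constructor
      · intro ha'
        by_cases ha : (f x : ℕ) < 2
        · have h1 := ih.1 ha
          have h2 := vne _ _ e1
          omega
        · have hb : (f (x + t) : ℕ) < 2 := by
            by_contra hb
            exact e3 (heq2 _ _ (by omega) (by omega))
          have hb' : (f (x + 2 + t) : ℕ) < 2 := by
            by_contra hb'
            exact H x 2 t (x + 2 + t) (Or.inl rfl) (Or.inr rfl) (Or.inl (by ring))
              (by omega) (by omega) (heq2 _ _ (by omega) (by omega))
          have h1 := ih.2 hb
          have h2 := vne _ _ e2
          have h4 := vne _ _ e4
          omega
      · intro hb'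
        by_cases hb : (f (x + t) : ℕ) < 2
        · have h1 := ih.2 hb
          have h2 := vne _ _ e2
          omega
        · have ha : (f x : ℕ) < 2 := by
            by_contra ha
            exact e3 (heq2 _ _ (by omega) (by omega))
          have ha' : (f (x + 2) : ℕ) < 2 := by
            by_contra ha'
            exact H (x + 2) t 2 (x + t) (Or.inr rfl) (Or.inl rfl) (Or.inr (by ring))
              (by omega) (by omega) (heq2 _ _ (by omega) (by omega))
          have h1 := ih.1 ha
          have h2 := vne _ _ e1
          have h4 := vne _ _ e4
          omega
  -- the three crucial columns
  obtain ⟨mo, hmo⟩ := ht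
  set T : ℕ := t.toNat with hT
  have hTt : (T:ℤ) = t := Int.toNat_of_nonneg (by omega)
  have hT2 : T % 2 = 1 := by omega
  have C : ∀ j : ℕ, j ≤ 2 → ∀ y z : ℤ, y = 2*(j:ℤ) + t → z = 2*(j:ℤ) + 2*t →
      2 ≤ (f y : ℕ) ∨ 2 ≤ (f z : ℕ) := by
    intro j hj y z hy hz
    subst hy hz
    by_contra hcc
    push_neg at hcc
    obtain ⟨hc1, hc2⟩ := hcc
    have h1 := (inv j).2 hc1
    have hpos : (2*((j+T:ℕ):ℤ)) = 2*(j:ℤ) + 2*t := by push_cast [hTt]; ring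
    have h2 := (inv (j+T)).1
    rw [hpos] at h2
    have h2' := h2 hc2
    have hfeq : f (2*(j:ℤ) + t) = f (2*(j:ℤ) + 2*t) := by
      apply Fin.val_injective
      have : (j+T) % 2 = (j+1) % 2 := by omega
      omega
    have := E (2*(j:ℤ) + t) t (Or.inr rfl)
    have hpp : 2*(j:ℤ) + t + t = 2*(j:ℤ) + 2*t := by ring
    rw [hpp] at this
    exact this hfeq
  have C0 := C 0 (by norm_num) t (2*t) (by norm_num) (by norm_num)
  have C1 := C 1 (by norm_num) (t+2) (2*t+2) (by push_cast; ring) (by push_cast; ring)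
  have C2 := C 2 (by norm_num) (t+4) (2*t+4) (by push_cast; ring) (by push_cast; ring)
  -- pairwise heavy exclusions among {t, t+2, t+4} and {2t, 2t+2, 2t+4}
  have pairE : ∀ x y : ℤ, y = x + 2 → ¬(2 ≤ (f x : ℕ) ∧ 2 ≤ (f y : ℕ)) := by
    rintro x y rfl ⟨h1, h2⟩
    exact E x 2 (Or.inl rfl) (heq2 _ _ h1 h2)
  have pair4 : ∀ x y : ℤ, y = x + 4 → ¬(2 ≤ (f x : ℕ) ∧ 2 ≤ (f y : ℕ)) := by
    rintro x y rfl ⟨h1, h2⟩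
    exact H x 2 2 (x+4) (Or.inl rfl) (Or.inl rfl) (Or.inl (by ring)) (by omega) h1
      (heq2 _ _ h1 h2)
  rcases C0 with c0 | c0 <;> rcases C1 with c1 | c1 <;> rcases C2 with c2 | c2
  · exact pairE t (t+2) (by ring) ⟨c0, c1⟩
  · exact pairE t (t+2) (by ring) ⟨c0, c1⟩
  · exact pair4 t (t+4) (by ring) ⟨c0, c2⟩
  · exact pairE (2*t+2) (2*t+4) (by ring) ⟨c1, c2⟩
  · exact pairE (t+2) (t+4) (by ring) ⟨c1, c2⟩
  · exact pair4 (2*t) (2*t+4) (by ring) ⟨c0, c2⟩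
  · exact pairE (2*t) (2*t+2) (by ring) ⟨c0, c1⟩
  · exact pairE (2*t) (2*t+2) (by ring) ⟨c0, c1⟩

theorem stmt5 (t : ℤ) (ht : Odd t) (h3 : 3 ≤ t) :
    IsLeast {k : ℕ | ∃ f : ℤ → Fin k, ∀ u v : ℤ, u ≠ v → f u = f v →
      ((f u : ℕ) < 2 → ¬ (distG t).Adj u v) ∧ (2 ≤ (f u : ℕ) → 2 < (distG t).dist u v)} 4 := by
  exact ⟨mem4 t ht h3, fun k hk => lb t ht h3 k hk⟩
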